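/- Let Λ be a compact metric space and let f_n : Λ×ℝ^N → ℝ^N, n ∈ ℤ, be continuous maps that are differentiable with respect to the ℝ^N variable with derivative Df_n(λ,u) continuous in (λ,u), satisfying (A1): f_n(λ,0) = 0 for all n ∈ ℤ and λ ∈ Λ; (A2): for every compact set K ⊂ ℝ^N and every ε > 0 there exists δ > 0 such that sup_{n∈ℤ}‖f_n(λ,x) − f_n(μ,y)‖ + sup_{n∈ℤ}‖Df_n(λ,x) − Df_n(μ,y)‖ < ε for all (λ,x),(μ,y) ∈ Λ×K with d(λ,μ) + ‖x−y‖ < δ; and sup_{(n,λ)∈ℤ×Λ} ‖Df_n(λ,0)‖ < ∞. For λ ∈ Λ let F_λ : c₀(ℝ^N) → c₀(ℝ^N) be given by (F_λ x)_n = x_{n+1} − f_n(λ,x_n), and for x ∈ c₀(ℝ^N) let T_λ(x) : c₀(ℝ^N) → c₀(ℝ^N) be the bounded linear operator (T_λ(x)y)_n = y_{n+1} − Df_n(λ,x_n)y_n. Then for every λ ∈ Λ, the map F_λ is Fréchet differentiable at every x ∈ c₀(ℝ^N) with derivative DF_λ(x) = T_λ(x), and the map (λ,x) ↦ T_λ(x)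 ∈ L(c₀(ℝ^N)) is continuous in the operator norm. -/

import Mathlib

open Filter

noncomputable section

/-- The space `c₀(ℝ^N)` of two-sided sequences in `ℝ^N` vanishing at `±∞`, with sup norm. -/
abbrev c0 (N : ℕ) := ZeroAtInftyContinuousMap ℤ (Fin N → ℝ)

namespace FDaux

open Topology

variable {N : ℕ}

lemma norm_apply_le (g : c0 N) (n : ℤ) : ‖g n‖ ≤ ‖g‖ := by
  rw [← ZeroAtInftyContinuousMap.norm_toBCF_eq_norm]
  exact g.toBCF.norm_coe_le_norm n

lemma norm_le_of {g : c0 N} {C : ℝ} (hC : 0 ≤ C) (h : ∀ n, ‖g n‖ ≤ C) : ‖g‖ ≤ C := by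
  rw [← ZeroAtInftyContinuousMap.norm_toBCF_eq_norm]
  exact (BoundedContinuousFunction.norm_le hC).mpr h

/-- Build an element of `c0 N` from a sequence tending to zero along `cofinite`. -/
def mk0 (g : ℤ → Fin N → ℝ) (hg : Tendsto g cofinite (𝓝 0)) : c0 N :=
  ⟨⟨g, continuous_of_discreteTopology⟩, by rwa [cocompact_eq_cofinite]⟩

@[simp] lemma mk0_apply (g : ℤ → Fin N → ℝ) (hg : Tendsto g cofinite (𝓝 0)) (n : ℤ) :
    mk0 g hg n = g n := rfl

lemma tendsto_c0 (x : c0 N) : Tendsto (fun n => x n) cofinite (𝓝 0) := by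
  have := zero_at_infty (F := c0 N) x
  rwa [cocompact_eq_cofinite] at this

lemma tendsto_shift (x : c0 N) : Tendsto (fun n => x (n + 1)) cofinite (𝓝 0) :=
  (tendsto_c0 x).comp ((add_left_injective (1 : ℤ)).tendsto_cofinite)

lemma bdd_of_cofinite {g : ℤ → ℝ} {B : ℝ} (h : ∀ᶠ n in cofinite, g n ≤ B) :
    ∃ M, 0 ≤ M ∧ ∀ n, g n ≤ M := by
  have hfin : {n : ℤ | ¬ g n ≤ B}.Finite := h
  obtain ⟨M, hM⟩ := (hfin.image g).bddAbove
  refine ⟨max (max B M) 0, le_max_right _ _, fun n => ?_⟩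
  by_cases hn : g n ≤ B
  · exact hn.trans ((le_max_left _ _).trans (le_max_left _ _))
  · exact (hM ⟨n, hn, rfl⟩).trans ((le_max_right B M).trans (le_max_left _ _))

/-- Tendsto-to-zero for the sequence defining `T`. -/
lemma tendstoT (A : ℤ → ((Fin N → ℝ) →L[ℝ] (Fin N → ℝ))) (M : ℝ)
    (hMle : ∀ n, ‖A n‖ ≤ M) (y : c0 N) :
    Tendsto (fun n => y (n + 1) - A n (y n)) cofinite (𝓝 (0 : Fin N → ℝ)) := by
  have h2 : Tendsto (fun n => A n (y n)) cofinite (𝓝 0) := by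
    apply squeeze_zero_norm (a := fun n => M * ‖y n‖)
    · intro n
      exact (ContinuousLinearMap.le_opNorm _ _).trans
        (mul_le_mul_of_nonneg_right (hMle n) (norm_nonneg _))
    · simpa using (tendsto_norm_zero.comp (tendsto_c0 y)).const_mul M
  simpa using (tendsto_shift y).sub h2

/-- The linear operator `(T y)ₙ = yₙ₊₁ - Aₙ yₙ` on `c0 N`, given a uniform bound on `A`. -/
def Tmap (A : ℤ → ((Fin N → ℝ) →L[ℝ] (Fin N → ℝ))) (M : ℝ)
    (hM0 : 0 ≤ M) (hMle : ∀ n, ‖A n‖ ≤ M) : c0 N →L[ℝ] c0 N :=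
  LinearMap.mkContinuous
    { toFun := fun y => mk0 (fun n => y (n + 1) - A n (y n)) (tendstoT A M hMle y)
      map_add' := by
        intro y z
        apply ZeroAtInftyContinuousMap.ext
        intro n
        simp [mk0]
        abel
      map_smul' := by
        intro c y
        apply ZeroAtInftyContinuousMap.ext
        intro n
        simp [mk0, smul_sub] }
    (1 + M)
    (by
      intro y
      apply norm_le_of (by positivity)
      intro n
      calc ‖y (n + 1) - A n (y n)‖ ≤ ‖y (n + 1)‖ + ‖A n (y n)‖ := norm_sub_le _ _
        _ ≤ ‖y‖ + M * ‖y‖ := add_le_add (norm_apply_le y (n + 1))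
            ((ContinuousLinearMap.le_opNorm _ _).trans
              (mul_le_mul (hMle n) (norm_apply_le y n) (norm_nonneg _) hM0))
        _ = (1 + M) * ‖y‖ := by ring)

@[simp] lemma Tmap_apply (A : ℤ → ((Fin N → ℝ) →L[ℝ] (Fin N → ℝ))) (M : ℝ)
    (hM0 : 0 ≤ M) (hMle : ∀ n, ‖A n‖ ≤ M) (y : c0 N) (n : ℤ) :
    Tmap A M hM0 hMle y n = y (n + 1) - A n (y n) := rfl

lemma Tmap_sub_norm_le {A B : ℤ → ((Fin N → ℝ) →L[ℝ] (Fin N → ℝ))} (M M' : ℝ)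
    (hM0 : 0 ≤ M) (hMle : ∀ n, ‖A n‖ ≤ M) (hM0' : 0 ≤ M') (hMle' : ∀ n, ‖B n‖ ≤ M')
    {ε : ℝ} (hε : 0 ≤ ε) (h : ∀ n, ‖A n - B n‖ ≤ ε) :
    ‖Tmap A M hM0 hMle - Tmap B M' hM0' hMle'‖ ≤ ε := by
  apply ContinuousLinearMap.opNorm_le_bound _ hε
  intro z
  apply norm_le_of (by positivity)
  intro n
  have e : ((Tmap A M hM0 hMle - Tmap B M' hM0' hMle') z) n
      = (B n - A n) (z n) := by
    simp [ContinuousLinearMap.sub_apply, ZeroAtInftyContinuousMap.coe_sub]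
  rw [e]
  calc ‖(B n - A n) (z n)‖ ≤ ‖B n - A n‖ * ‖z n‖ := ContinuousLinearMap.le_opNorm _ _
    _ = ‖A n - B n‖ * ‖z n‖ := by rw [norm_sub_rev]
    _ ≤ ε * ‖z‖ := mul_le_mul (h n) (norm_apply_le z n) (norm_nonneg _) hε

end FDaux

open Topology

set_option maxHeartbeats 1000000 in
theorem F_differentiable {N : ℕ} {Λ : Type*}
    [MetricSpace Λ] [CompactSpace Λ]
    (f : ℤ → Λ → (Fin N → ℝ) → (Fin N → ℝ))
    (Df : ℤ → Λ → (Fin N → ℝ) → ((Fin N → ℝ) →L[ℝ] (Fin N → ℝ)))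
    (hcont : ∀ n : ℤ, Continuous (fun p : Λ × (Fin N → ℝ) => f n p.1 p.2))
    (hdiff : ∀ (n : ℤ) (lam : Λ) (u : Fin N → ℝ), HasFDerivAt (f n lam) (Df n lam u) u)
    (hDcont : ∀ n : ℤ, Continuous (fun p : Λ × (Fin N → ℝ) => Df n p.1 p.2))
    (hA1 : ∀ (n : ℤ) (lam : Λ), f n lam 0 = 0)
    (hA2 : ∀ K : Set (Fin N → ℝ), IsCompact K → ∀ ε > (0:ℝ), ∃ δ > (0:ℝ),
      ∀ (lam mu : Λ) (x y : Fin N → ℝ), x ∈ K → y ∈ K →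
        dist lam mu + ‖x - y‖ < δ →
          ∀ n : ℤ, ‖f n lam x - f n mu y‖ + ‖Df n lam x - Df n mu y‖ < ε)
    (hC0 : ∃ C : ℝ, ∀ (n : ℤ) (lam : Λ), ‖Df n lam 0‖ ≤ C) :
    ∃ (F : Λ → c0 N → c0 N) (T : Λ → c0 N → (c0 N →L[ℝ] c0 N)),
      (∀ (lam : Λ) (x : c0 N) (n : ℤ), F lam x n = x (n + 1) - f n lam (x n)) ∧
      (∀ (lam : Λ) (x y : c0 N) (n : ℤ),
        T lam x y n = y (n + 1) - Df n lam (x n) (y n)) ∧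
      (∀ (lam : Λ) (x : c0 N), HasFDerivAt (F lam) (T lam x) x) ∧
      Continuous (fun p : Λ × c0 N => T p.1 p.2) := by
  classical
  obtain ⟨C₀, hC⟩ := hC0
  -- reformulation of (A2) with balls
  have key : ∀ (R ε : ℝ), 0 < ε → ∃ δ > (0:ℝ), ∀ (lam mu : Λ) (x y : Fin N → ℝ),
      ‖x‖ ≤ R → ‖y‖ ≤ R → dist lam mu + ‖x - y‖ < δ →
      ∀ n : ℤ, ‖f n lam x - f n mu y‖ + ‖Df n lam x - Df n mu y‖ < ε := by
    intro R ε hε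
    obtain ⟨δ, hδ, H⟩ := hA2 (Metric.closedBall 0 R) (isCompact_closedBall 0 R) ε hε
    exact ⟨δ, hδ, fun lam mu x y hx hy hd =>
      H lam mu x y (by simpa [mem_closedBall_zero_iff] using hx)
        (by simpa [mem_closedBall_zero_iff] using hy) hd⟩
  -- the nonlinear part tends to zero along cofinite
  have hf0 : ∀ (lam : Λ) (x : c0 N),
      Tendsto (fun n => f n lam (x n)) cofinite (𝓝 (0 : Fin N → ℝ)) := by
    intro lam x
    rw [NormedAddCommGroup.tendsto_nhds_zero]
    intro ε hε
    obtain ⟨δ, hδ, H⟩ := key ‖x‖ ε hε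
    filter_upwards [(NormedAddCommGroup.tendsto_nhds_zero.mp (FDaux.tendsto_c0 x)) δ hδ]
      with n hn
    have h1 := H lam lam (x n) 0 (FDaux.norm_apply_le x n) (by simp)
      (by simpa [dist_self] using hn) n
    rw [hA1 n lam, sub_zero] at h1
    exact lt_of_le_of_lt (le_add_of_nonneg_right (norm_nonneg _)) h1
  -- uniform bound on the derivatives along x
  have hM : ∀ (lam : Λ) (x : c0 N), ∃ M, 0 ≤ M ∧ ∀ n, ‖Df n lam (x n)‖ ≤ M := by
    intro lam x
    obtain ⟨δ, hδ, H⟩ := key ‖x‖ 1 one_pos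
    have hev : ∀ᶠ n in cofinite, ‖Df n lam (x n)‖ ≤ C₀ + 1 := by
      filter_upwards [(NormedAddCommGroup.tendsto_nhds_zero.mp (FDaux.tendsto_c0 x)) δ hδ]
        with n hn
      have h2 := H lam lam (x n) 0 (FDaux.norm_apply_le x n) (by simp)
        (by simpa [dist_self] using hn) n
      have h3 : ‖Df n lam (x n) - Df n lam 0‖ ≤ 1 :=
        le_of_lt (lt_of_le_of_lt (le_add_of_nonneg_left (norm_nonneg _)) h2)
      calc ‖Df n lam (x n)‖ ≤ ‖Df n lam 0‖ + ‖Df n lam (x n) - Df n lam 0‖ := by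
            simpa using norm_add_le (Df n lam 0) (Df n lam (x n) - Df n lam 0)
        _ ≤ C₀ + 1 := add_le_add (hC n lam) h3
    obtain ⟨M, hM0, hMle⟩ := FDaux.bdd_of_cofinite hev
    exact ⟨M, hM0, hMle⟩
  choose M hM0 hMle using hM
  refine ⟨fun lam x => FDaux.mk0 (fun n => x (n + 1) - f n lam (x n))
      (by simpa using (FDaux.tendsto_shift x).sub (hf0 lam x)),
    fun lam x => FDaux.Tmap (fun n => Df n lam (x n)) (M lam x) (hM0 lam x) (hMle lam x),
    fun lam x n => rfl, fun lam x y n => rfl, ?_, ?_⟩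
  · -- differentiability
    intro lam x
    rw [hasFDerivAt_iff_isLittleO_nhds_zero, Asymptotics.isLittleO_iff]
    intro ε hε
    obtain ⟨δ, hδ, H⟩ := key (‖x‖ + 1) ε hε
    have hδ1 : (0:ℝ) < min δ 1 := lt_min hδ one_pos
    filter_upwards [Metric.ball_mem_nhds 0 hδ1] with h hh
    rw [Metric.mem_ball, dist_zero_right] at hh
    have hhδ : ‖h‖ < δ := lt_of_lt_of_le hh (min_le_left _ _)
    have hh1 : ‖h‖ ≤ 1 := le_of_lt (lt_of_lt_of_le hh (min_le_right _ _))
    apply FDaux.norm_le_of (by positivity)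
    intro n
    have e3 : ((x + h : c0 N)) n = x n + h n := by simp
    have e4 : ((x + h : c0 N)) (n + 1) = x (n + 1) + h (n + 1) := by simp
    have hcoord :
        (FDaux.mk0 (fun m => (x + h : c0 N) (m + 1) - f m lam ((x + h : c0 N) m))
            (by simpa using (FDaux.tendsto_shift (x + h)).sub (hf0 lam (x + h))) -
          FDaux.mk0 (fun m => x (m + 1) - f m lam (x m))
            (by simpa using (FDaux.tendsto_shift x).sub (hf0 lam x)) -
          FDaux.Tmap (fun m => Df m lam (x m)) (M lam x) (hM0 lam x) (hMle lam x) h) n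
        = -(f n lam (x n + h n) - f n lam (x n) - Df n lam (x n) (h n)) := by
      simp only [ZeroAtInftyContinuousMap.coe_sub, Pi.sub_apply, FDaux.mk0_apply,
        FDaux.Tmap_apply, e3, e4]
      abel
    rw [hcoord, norm_neg]
    have seg : Convex ℝ (Metric.closedBall (x n) ‖h‖) := convex_closedBall _ _
    have hb : ∀ z ∈ Metric.closedBall (x n) ‖h‖, ‖Df n lam z - Df n lam (x n)‖ ≤ ε := by
      intro z hz
      rw [Metric.mem_closedBall, dist_eq_norm] at hz
      have hzK : ‖z‖ ≤ ‖x‖ + 1 := by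
        calc ‖z‖ ≤ ‖x n‖ + ‖z - x n‖ := by simpa using norm_add_le (x n) (z - x n)
          _ ≤ ‖x‖ + 1 := add_le_add (FDaux.norm_apply_le x n) (hz.trans hh1)
      have hxn : ‖x n‖ ≤ ‖x‖ + 1 :=
        (FDaux.norm_apply_le x n).trans (by linarith [norm_nonneg x])
      have h5 := H lam lam z (x n) hzK hxn
        (by simpa [dist_self] using lt_of_le_of_lt hz hhδ) n
      exact le_of_lt (lt_of_le_of_lt (le_add_of_nonneg_left (norm_nonneg _)) h5)
    have hmv := seg.norm_image_sub_le_of_norm_hasFDerivWithin_le'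
      (fun z _ => (hdiff n lam z).hasFDerivWithinAt) hb
      (Metric.mem_closedBall_self (norm_nonneg _))
      (show x n + h n ∈ Metric.closedBall (x n) ‖h‖ by
        rw [Metric.mem_closedBall, dist_eq_norm]
        simpa using FDaux.norm_apply_le h n)
    simp only [add_sub_cancel_left] at hmv
    exact hmv.trans (mul_le_mul_of_nonneg_left (FDaux.norm_apply_le h n) (le_of_lt hε))
  · -- continuity of T
    show Continuous fun p : Λ × c0 N =>
      FDaux.Tmap (fun n => Df n p.1 (p.2 n)) (M p.1 p.2) (hM0 p.1 p.2) (hMle p.1 p.2)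
    have hcont' : ∀ (b : Λ × c0 N), ∀ ε > (0:ℝ), ∃ δ > 0, ∀ a : Λ × c0 N,
        dist a b < δ →
        dist (FDaux.Tmap (fun n => Df n a.1 (a.2 n)) (M a.1 a.2) (hM0 a.1 a.2) (hMle a.1 a.2))
          (FDaux.Tmap (fun n => Df n b.1 (b.2 n)) (M b.1 b.2) (hM0 b.1 b.2) (hMle b.1 b.2))
          < ε := by
      rintro ⟨lam, x⟩ ε hε
      obtain ⟨δ, hδ, H⟩ := key (‖x‖ + 1) (ε / 2) (half_pos hε)
      refine ⟨min (δ / 2) (1 / 2), by positivity, ?_⟩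
      rintro ⟨mu, y⟩ hd
      have hd1 : dist mu lam < min (δ / 2) (1 / 2) :=
        lt_of_le_of_lt (le_max_left _ _) (by rwa [Prod.dist_eq] at hd)
      have hd2 : ‖y - x‖ < min (δ / 2) (1 / 2) := by
        have := lt_of_le_of_lt (le_max_right (dist mu lam) (dist y x)) (by rwa [Prod.dist_eq] at hd)
        rwa [dist_eq_norm] at this
      have hy : ‖y‖ ≤ ‖x‖ + 1 := by
        calc ‖y‖ ≤ ‖x‖ + ‖y - x‖ := by simpa using norm_add_le x (y - x)
          _ ≤ ‖x‖ + 1 := by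
              have : ‖y - x‖ ≤ 1 := le_of_lt (lt_of_lt_of_le hd2 (by norm_num [min_le_right]))
              linarith
      have hbound : ∀ n : ℤ, ‖Df n mu (y n) - Df n lam (x n)‖ ≤ ε / 2 := by
        intro n
        have hyn : ‖y n‖ ≤ ‖x‖ + 1 := (FDaux.norm_apply_le y n).trans hy
        have hxn : ‖x n‖ ≤ ‖x‖ + 1 :=
          (FDaux.norm_apply_le x n).trans (by linarith [norm_nonneg x])
        have hsub : ‖y n - x n‖ ≤ ‖y - x‖ := by
          have := FDaux.norm_apply_le (y - x) n
          simpa [ZeroAtInftyContinuousMap.coe_sub] using this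
        have hdist : dist mu lam + ‖y n - x n‖ < δ := by
          have h1 : dist mu lam < δ / 2 := lt_of_lt_of_le hd1 (min_le_left _ _)
          have h2 : ‖y n - x n‖ < δ / 2 :=
            lt_of_le_of_lt hsub (lt_of_lt_of_le hd2 (min_le_left _ _))
          linarith
        have h5 := H mu lam (y n) (x n) hyn hxn hdist n
        exact le_of_lt (lt_of_le_of_lt (le_add_of_nonneg_left (norm_nonneg _)) h5)
      have hfin := FDaux.Tmap_sub_norm_le (M mu y) (M lam x) (hM0 mu y) (hMle mu y) (hM0 lam x) (hMle lam x) (le_of_lt (half_pos hε)) hbound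
      exact lt_of_le_of_lt ((dist_eq_norm (E := c0 N →L[ℝ] c0 N) _ _).trans_le hfin) (half_lt_self hε)

    exact Metric.continuous_iff.mpr hcont'

end
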